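/- arXiv:2512.00751 — 2 statements merged into one kernel-verified Lean document; each statement's English description precedes it below -/
import Mathlib

section
/- Let F, G, H be probability measures on ℝ^d and r > 0. Then the Lévy–Prokhorov distance satisfies π(F, G) ≤ π(F ∗ H, G ∗ H) + 2·max{r, H({x : ‖x‖ ≥ r})}, where ∗ denotes convolution of measures. -/
open MeasureTheory Metric

/-- The Lévy–Prokhorov distance between two measures on `ℝ^d`. -/
noncomputable def levyProkhorov {d : ℕ} (F G : Measure (EuclideanSpace ℝ (Fin d))) : ℝ :=
  sInf {ε : ℝ | 0 < ε ∧ ∀ A : Set (EuclideanSpace ℝ (Fin d)), MeasurableSet A →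
    F A ≤ G (thickening ε A) + ENNReal.ofReal ε}

/-- The convolution of two measures: the law of `X + Y` for independent `X ∼ F`, `Y ∼ H`. -/
noncomputable def conv {d : ℕ} (F H : Measure (EuclideanSpace ℝ (Fin d))) :
    Measure (EuclideanSpace ℝ (Fin d)) :=
  (F.prod H).map (fun p => p.1 + p.2)

lemma conv_isProb {d : ℕ} (F H : Measure (EuclideanSpace ℝ (Fin d)))
    [IsProbabilityMeasure F] [IsProbabilityMeasure H] : IsProbabilityMeasure (conv F H) := by
  unfold conv
  exact Measure.isProbabilityMeasure_map ((measurable_fst.add measurable_snd).aemeasurable)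

/-- `π(F, G) ≤ π(F ∗ H, G ∗ H) + 2·max{r, H({x : ‖x‖ ≥ r})}`. -/
theorem levyProkhorov_le_conv {d : ℕ} (F G H : Measure (EuclideanSpace ℝ (Fin d)))
    [IsProbabilityMeasure F] [IsProbabilityMeasure G] [IsProbabilityMeasure H]
    (r : ℝ) (hr : 0 < r) :
    levyProkhorov F G ≤ levyProkhorov (conv F H) (conv G H) +
      2 * max r (H {x | r ≤ ‖x‖}).toReal := by
  haveI := conv_isProb F H
  haveI := conv_isProb G H
  set β := H {x | r ≤ ‖x‖} with hβdef
  set m := max r β.toReal with hmdef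
  set S := {ε : ℝ | 0 < ε ∧ ∀ A : Set (EuclideanSpace ℝ (Fin d)), MeasurableSet A →
    F A ≤ G (thickening ε A) + ENNReal.ofReal ε} with hSdef
  set T := {ε : ℝ | 0 < ε ∧ ∀ A : Set (EuclideanSpace ℝ (Fin d)), MeasurableSet A →
    conv F H A ≤ conv G H (thickening ε A) + ENNReal.ofReal ε} with hTdef
  have hβmeas : MeasurableSet {x : EuclideanSpace ℝ (Fin d) | r ≤ ‖x‖} :=
    (isClosed_le continuous_const continuous_norm).measurableSet
  have hβ1 : β ≤ 1 := prob_le_one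
  have hβtop : β ≠ ⊤ := measure_ne_top _ _
  have hmr : r ≤ m := le_max_left _ _
  have hmβ : β ≤ ENNReal.ofReal m := by
    rw [← ENNReal.ofReal_toReal hβtop]
    exact ENNReal.ofReal_le_ofReal (le_max_right _ _)
  have hm0 : 0 < m := lt_of_lt_of_le hr hmr
  have hmap : ∀ (μ : Measure (EuclideanSpace ℝ (Fin d))) (s : Set (EuclideanSpace ℝ (Fin d))),
      MeasurableSet s → conv μ H s =
        (μ.prod H) ((fun p : EuclideanSpace ℝ (Fin d) × EuclideanSpace ℝ (Fin d) =>
          p.1 + p.2) ⁻¹' s) := by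
    intro μ s hs
    rw [conv, Measure.map_apply measurable_add hs]
  -- key step: if ε is admissible for the convolutions, ε + 2m is admissible for F, G
  have key : ∀ ε ∈ T, ε + 2 * m ∈ S := by
    rintro ε ⟨hε0, hε⟩
    refine ⟨by positivity, fun A hA => ?_⟩
    -- Step 1 : F A ≤ conv F H (thickening r A) + β
    have step1 : F A ≤ conv F H (thickening r A) + β := by
      have hsub : A ×ˢ ball (0 : EuclideanSpace ℝ (Fin d)) r ⊆
          (fun p : EuclideanSpace ℝ (Fin d) × EuclideanSpace ℝ (Fin d) =>
            p.1 + p.2) ⁻¹' thickening r A := by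
        rintro ⟨a, y⟩ ⟨ha, hy⟩
        simp only [Set.mem_preimage]
        rw [mem_thickening_iff]
        refine ⟨a, ha, ?_⟩
        rw [dist_eq_norm, add_sub_cancel_left]
        exact mem_ball_zero_iff.1 hy
      have h2 : F A * H (ball 0 r) ≤ conv F H (thickening r A) := by
        rw [hmap F _ isOpen_thickening.measurableSet, ← Measure.prod_prod]
        exact measure_mono hsub
      have hball : H (ball (0 : EuclideanSpace ℝ (Fin d)) r) = 1 - β := by
        have hc : ball (0 : EuclideanSpace ℝ (Fin d)) r = {x | r ≤ ‖x‖}ᶜ := by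
          ext x; simp [mem_ball_zero_iff, not_le]
        rw [hc, measure_compl hβmeas (measure_ne_top _ _), measure_univ, hβdef]
      calc F A = F A * ((1 - β) + β) := by rw [tsub_add_cancel_of_le hβ1, mul_one]
        _ = F A * (1 - β) + F A * β := by ring
        _ ≤ conv F H (thickening r A) + β := by
            gcongr
            · rw [← hball]; exact h2
            · calc F A * β ≤ 1 * β := by gcongr; exact prob_le_one
                _ = β := one_mul β
    -- Step 4 : conv G H (thickening (ε + r) A) ≤ G (thickening (ε + 2*r) A) + β
    have step4 : conv G H (thickening (ε + r) A) ≤ G (thickening (ε + 2 * r) A) + β := by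
      rw [hmap G _ isOpen_thickening.measurableSet]
      have hsub : (fun p : EuclideanSpace ℝ (Fin d) × EuclideanSpace ℝ (Fin d) =>
            p.1 + p.2) ⁻¹' thickening (ε + r) A ⊆
          (thickening (ε + 2 * r) A) ×ˢ Set.univ ∪ Set.univ ×ˢ {x | r ≤ ‖x‖} := by
        rintro ⟨a, y⟩ hp
        simp only [Set.mem_preimage] at hp
        by_cases hy : r ≤ ‖y‖
        · exact Or.inr ⟨Set.mem_univ _, hy⟩
        · push_neg at hy
          left
          refine ⟨?_, Set.mem_univ _⟩
          have hmem : a ∈ thickening r (thickening (ε + r) A) := by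
            rw [mem_thickening_iff]
            refine ⟨a + y, hp, ?_⟩
            rw [dist_eq_norm]
            simpa using hy
          have h := thickening_thickening_subset r (ε + r) A hmem
          have hq : r + (ε + r) = ε + 2 * r := by ring
          rwa [hq] at h
      calc (G.prod H) ((fun p : EuclideanSpace ℝ (Fin d) × EuclideanSpace ℝ (Fin d) =>
              p.1 + p.2) ⁻¹' thickening (ε + r) A)
          ≤ (G.prod H) ((thickening (ε + 2 * r) A) ×ˢ Set.univ ∪ Set.univ ×ˢ {x | r ≤ ‖x‖}) :=
            measure_mono hsub
        _ ≤ (G.prod H) ((thickening (ε + 2 * r) A) ×ˢ Set.univ) +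
              (G.prod H) (Set.univ ×ˢ {x | r ≤ ‖x‖}) := measure_union_le _ _
        _ = G (thickening (ε + 2 * r) A) + β := by
            rw [Measure.prod_prod, Measure.prod_prod, measure_univ, measure_univ, mul_one, one_mul]
    -- combine
    calc F A ≤ conv F H (thickening r A) + β := step1
      _ ≤ (conv G H (thickening ε (thickening r A)) + ENNReal.ofReal ε) + β :=
          add_le_add (hε _ isOpen_thickening.measurableSet) le_rfl
      _ ≤ (conv G H (thickening (ε + r) A) + ENNReal.ofReal ε) + β :=
          add_le_add (add_le_add
            (measure_mono (thickening_thickening_subset ε r A)) le_rfl) le_rfl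
      _ ≤ ((G (thickening (ε + 2 * r) A) + β) + ENNReal.ofReal ε) + β :=
          add_le_add (add_le_add step4 le_rfl) le_rfl
      _ = G (thickening (ε + 2 * r) A) + (β + β + ENNReal.ofReal ε) := by ring
      _ ≤ G (thickening (ε + 2 * m) A) +
            (ENNReal.ofReal m + ENNReal.ofReal m + ENNReal.ofReal ε) :=
          add_le_add (measure_mono (thickening_mono (by linarith) A))
            (add_le_add (add_le_add hmβ hmβ) le_rfl)
      _ = G (thickening (ε + 2 * m) A) + ENNReal.ofReal (ε + 2 * m) := by
          have hq : ε + 2 * m = (m + m) + ε := by ring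
          rw [hq, ENNReal.ofReal_add (by positivity) hε0.le, ENNReal.ofReal_add hm0.le hm0.le]
  -- T is nonempty
  have hT_ne : T.Nonempty := by
    refine ⟨2, by norm_num, fun A hA => ?_⟩
    calc conv F H A ≤ 1 := prob_le_one
      _ ≤ ENNReal.ofReal 2 := by norm_num
      _ ≤ conv G H (thickening 2 A) + ENNReal.ofReal 2 := le_add_self
  have hS_bdd : BddBelow S := ⟨0, fun x hx => hx.1.le⟩
  have h1 : ∀ ε ∈ T, sInf S ≤ ε + 2 * m := fun ε hε => csInf_le hS_bdd (key ε hε)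
  have h2 : sInf S - 2 * m ≤ sInf T :=
    le_csInf hT_ne (fun ε hε => by linarith [h1 ε hε])
  show sInf S ≤ sInf T + 2 * m
  linarith
end

section
/- Let A be an n×n positive semidefinite Hermitian matrix with nonincreasing eigenvalues a_1 ≥ a_2 ≥ … ≥ a_n ≥ 0, effective rank r = Tr(A)²/Tr(A²) (assumed a positive integer), and semi-isotropic replacement à with eigenvalues ã_i = Tr(A)/r for i ≤ r and 0 otherwise. Then Tr(A·Ã) ≥ (Tr(A²)/Tr(A))·(Tr(A) − n·a_{r+1}), and consequently Tr[(A − Ã)²] ≤ 2·(Tr(A²)/Tr(A))·n·a_{r+1}. -/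
open Matrix
open scoped ComplexOrder

/-- For a PSD matrix `A` with nonincreasing eigenvalues `a`, integer effective rank
`r = Tr(A)²/Tr(A²)`, and semi-isotropic replacement `Atil`:
`Tr(A·Atil) ≥ (Tr(A²)/Tr(A))·(Tr(A) − n·a_{r+1})` and
`Tr[(A − Atil)²] ≤ 2·(Tr(A²)/Tr(A))·n·a_{r+1}`. -/
theorem semi_isotropic_trace_bounds {n : ℕ}
    (U : Matrix (Fin n) (Fin n) ℂ) (hU : U ∈ Matrix.unitaryGroup (Fin n) ℂ)
    (a : Fin n → ℝ) (ha : Antitone a) (ha0 : ∀ i, 0 ≤ a i) (hane : ∃ i, a i ≠ 0)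
    (r : ℕ) (hrpos : 0 < r)
    (hr : (r : ℝ) = (∑ i, a i) ^ 2 / (∑ i, (a i) ^ 2))
    (A Atil : Matrix (Fin n) (Fin n) ℂ)
    (hA : A = U * Matrix.diagonal (fun i => (a i : ℂ)) * Uᴴ)
    (hAtil : Atil = U * Matrix.diagonal
      (fun i : Fin n => if (i : ℕ) < r then (((∑ j, a j) / r : ℝ) : ℂ) else 0) * Uᴴ)
    (a' : ℝ) (ha' : a' = if h : r < n then a ⟨r, h⟩ else 0) :
    ((∑ i, (a i) ^ 2) / (∑ i, a i)) * ((∑ i, a i) - n * a') ≤ ((A * Atil).trace).re ∧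
    (((A - Atil) * (A - Atil)).trace).re ≤ 2 * ((∑ i, (a i) ^ 2) / (∑ i, a i)) * n * a' := by
  classical
  set T : ℝ := ∑ i, a i with hTdef
  set S : ℝ := ∑ i, (a i)^2 with hSdef
  -- real eigenvalues of Atil
  set e : Fin n → ℝ := fun i => if (i : ℕ) < r then T / r else 0 with hedef
  have hUU : Uᴴ * U = 1 := by
    have := hU.1
    simpa [Matrix.star_eq_conjTranspose] using this
  have key : ∀ f g : Fin n → ℂ,
      ((U * Matrix.diagonal f * Uᴴ) * (U * Matrix.diagonal g * Uᴴ)).trace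
        = ∑ i, f i * g i := by
    intro f g
    have h1 : (U * Matrix.diagonal f * Uᴴ) * (U * Matrix.diagonal g * Uᴴ)
        = U * Matrix.diagonal (fun i => f i * g i) * Uᴴ := by
      calc (U * Matrix.diagonal f * Uᴴ) * (U * Matrix.diagonal g * Uᴴ)
          = U * (Matrix.diagonal f * ((Uᴴ * U) * (Matrix.diagonal g * Uᴴ))) := by
            simp only [Matrix.mul_assoc]
        _ = _ := by
            rw [hUU, Matrix.one_mul, ← Matrix.mul_assoc (Matrix.diagonal f),
              Matrix.diagonal_mul_diagonal, ← Matrix.mul_assoc]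
    rw [h1, Matrix.trace_mul_cycle, hUU, Matrix.one_mul, Matrix.trace_diagonal]
  -- identify Atil's diagonal entries with casts of e
  have hAtil' : Atil = U * Matrix.diagonal (fun i => ((e i : ℝ) : ℂ)) * Uᴴ := by
    rw [hAtil]
    have : (fun i : Fin n => if (i : ℕ) < r then ((T / r : ℝ) : ℂ) else 0)
        = fun i => ((e i : ℝ) : ℂ) := by
      funext i
      by_cases h : (i : ℕ) < r <;> simp [hedef, h]
    rw [this]
  have hdiff : A - Atil = U * Matrix.diagonal (fun i => ((a i - e i : ℝ) : ℂ)) * Uᴴ := by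
    rw [hA, hAtil']
    rw [← Matrix.sub_mul, ← Matrix.mul_sub, Matrix.diagonal_sub]
    congr 2
    funext i
    push_cast
    ring
  have h2 : ((A * Atil).trace).re = ∑ i, a i * e i := by
    rw [hA, hAtil', key]
    have : (∑ i, ((a i : ℂ) * ((e i : ℝ) : ℂ))) = ((∑ i, a i * e i : ℝ) : ℂ) := by
      rw [Complex.ofReal_sum]
      apply Finset.sum_congr rfl
      intro i _
      push_cast
      ring
    rw [this, Complex.ofReal_re]
  have h3 : (((A - Atil) * (A - Atil)).trace).re = ∑ i, (a i - e i)^2 := by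
    rw [hdiff, key]
    have : (∑ i, (((a i - e i : ℝ) : ℂ) * ((a i - e i : ℝ) : ℂ)))
        = ((∑ i, (a i - e i)^2 : ℝ) : ℂ) := by
      rw [Complex.ofReal_sum]
      apply Finset.sum_congr rfl
      intro i _
      push_cast
      ring
    rw [this, Complex.ofReal_re]
  -- basic positivity
  obtain ⟨i0, hi0⟩ := hane
  have hT : 0 < T :=
    Finset.sum_pos' (fun i _ => ha0 i)
      ⟨i0, Finset.mem_univ _, lt_of_le_of_ne (ha0 i0) (Ne.symm hi0)⟩
  have hS : 0 < S :=
    Finset.sum_pos' (fun i _ => sq_nonneg _)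
      ⟨i0, Finset.mem_univ _, by positivity⟩
  have hr' : (r : ℝ) * S = T ^ 2 := by
    rw [hr]; field_simp
  have hrR : (0:ℝ) < (r:ℝ) := by exact_mod_cast hrpos
  have hcS : T / r = S / T := by
    rw [div_eq_div_iff hrR.ne' hT.ne']
    nlinarith [hr']
  -- tail bound
  have htail : ∑ i : Fin n, (if (i : ℕ) < r then 0 else a i) ≤ n * a' := by
    by_cases h : r < n
    · have ha'eq : a' = a ⟨r, h⟩ := by rw [ha']; simp [h]
      have ha'0 : 0 ≤ a' := ha'eq ▸ ha0 _
      calc ∑ i : Fin n, (if (i : ℕ) < r then 0 else a i)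
          ≤ ∑ _i : Fin n, a' := by
            apply Finset.sum_le_sum
            intro i _
            by_cases hi : (i : ℕ) < r
            · simp [hi, ha'0]
            · simp only [hi, if_false]
              rw [ha'eq]
              exact ha (by simpa [Fin.le_def] using not_lt.mp hi)
        _ = n * a' := by simp [Finset.sum_const, Finset.card_univ, nsmul_eq_mul]
    · have hall : ∀ i : Fin n, (i : ℕ) < r := fun i => lt_of_lt_of_le i.isLt (not_lt.mp h)
      have ha'eq : a' = 0 := by rw [ha']; simp [h]
      simp [hall, ha'eq]
  set P : ℝ := ∑ i : Fin n, (if (i : ℕ) < r then a i else 0) with hPdef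
  have hPge : T - n * a' ≤ P := by
    have hsplit : T = P + ∑ i : Fin n, (if (i : ℕ) < r then 0 else a i) := by
      rw [hPdef, ← Finset.sum_add_distrib]
      apply Finset.sum_congr rfl
      intro i _
      by_cases h : (i : ℕ) < r <;> simp [h]
    linarith
  -- trace(A*Atil) real value
  have hP2 : ∑ i, a i * e i = P * (S / T) := by
    rw [hPdef, Finset.sum_mul]
    apply Finset.sum_congr rfl
    intro i _
    by_cases h : (i : ℕ) < r <;> simp [hedef, h, hcS]
  have hST : 0 < S / T := div_pos hS hT
  have goal1 : S / T * (T - n * a') ≤ ∑ i, a i * e i := by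
    rw [hP2]
    calc S / T * (T - n * a') ≤ S / T * P := by
          exact mul_le_mul_of_nonneg_left hPge hST.le
      _ = P * (S / T) := mul_comm _ _
  -- sum of e^2 bounded by S
  have he2 : ∑ i, (e i)^2 ≤ S := by
    have hcard : (Finset.univ.filter (fun i : Fin n => (i : ℕ) < r)).card ≤ r := by
      have := Finset.card_le_card_of_injOn (fun i : Fin n => (i : ℕ))
        (s := Finset.univ.filter (fun i : Fin n => (i : ℕ) < r))
        (t := Finset.range r)
        (fun i hi => by
          simp only [Finset.mem_coe, Finset.mem_filter] at hi
          exact Finset.mem_range.mpr hi.2)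
        (fun i _ j _ hij => Fin.val_injective hij)
      exact le_trans this (by simp)
    have he1 : ∑ i, (e i)^2 = ∑ i : Fin n, (if (i : ℕ) < r then (T/r)^2 else 0) := by
      apply Finset.sum_congr rfl
      intro i _
      by_cases h : (i : ℕ) < r <;> simp [hedef, h]
    rw [he1, ← Finset.sum_filter, Finset.sum_const, nsmul_eq_mul]
    have hrc : (r : ℝ) * (T / r)^2 = S := by
      field_simp
      nlinarith [hr']
    calc ((Finset.univ.filter (fun i : Fin n => (i : ℕ) < r)).card : ℝ) * (T/r)^2
        ≤ (r : ℝ) * (T/r)^2 := by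
          apply mul_le_mul_of_nonneg_right _ (sq_nonneg _)
          exact_mod_cast hcard
      _ = S := hrc
  -- expand the square
  have hQ : ∑ i, (a i - e i)^2 = S - 2 * (∑ i, a i * e i) + ∑ i, (e i)^2 := by
    have h4 : ∀ i : Fin n, (a i - e i)^2 = (a i)^2 - 2*(a i * e i) + (e i)^2 :=
      fun i => by ring
    rw [Finset.sum_congr rfl (fun i _ => h4 i)]
    rw [Finset.sum_add_distrib, Finset.sum_sub_distrib, ← Finset.mul_sum]
  have hSTT : S / T * T = S := div_mul_cancel₀ S hT.ne'
  constructor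
  · rw [h2]; exact goal1
  · rw [h3, hQ]
    have hexp : S / T * (T - ↑n * a') = S - S / T * (↑n * a') := by
      rw [mul_sub, hSTT]
    have goal1' : S - S / T * (↑n * a') ≤ ∑ i, a i * e i := by
      rw [← hexp]; exact goal1
    linarith [goal1', he2]
end
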